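/- Let H ∈ (0, 1/2), α > 1/(2(1−H)), Δ = n^{−α}, and let Y_t = ∫_0^t f(s,X_s)ds with |f| ≤ M. Let a be a filter of length p+1. Then n^{−1/2} Δ^{−2H} ∑_{i=0}^{n−p} (Δ_a Y_i)^2 ≤ C n^{1/2 − α(2−2H)} → 0, and E[n^{−1/2} Δ^{−2H} ∑_{i=0}^{n−p} |Δ_a B^H_i| |Δ_a Y_i|] ≤ C n^{1/2 − α(1−H)} → 0 as n → ∞. -/

import Mathlib

open Finset MeasureTheory ProbabilityTheory Filter
open scoped NNReal ENNReal

/-- Filtered increment of a random process `Z` on the grid of mesh `Δ`. -/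
def deltaAOmega {Ω : Type*} (a : ℕ → ℝ) (p : ℕ) (Δ : ℝ) (Z : ℝ → Ω → ℝ)
    (j : ℕ) (ω : Ω) : ℝ :=
  ∑ i ∈ range (p + 1), a i * Z (((i + j : ℕ) : ℝ) * Δ) ω

lemma aux_int_Ioi {b : ℝ} (hb : 0 < b) :
    ∫ r in Set.Ioi (0:ℝ), r * Real.exp (-b * r^2) = (2*b)⁻¹ := by
  have hb' : 0 < (b:ℂ).re := by simpa using hb
  have h := integral_mul_cexp_neg_mul_sq hb'
  have hfun : (fun r : ℝ => ((r * Real.exp (-b * r^2) : ℝ) : ℂ))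
      = fun r : ℝ => (r:ℂ) * Complex.exp (-(b:ℂ) * (r:ℂ)^2) := by
    funext r
    push_cast [Complex.ofReal_exp]
    ring_nf
  have h2 : ((∫ r in Set.Ioi (0:ℝ), r * Real.exp (-b * r^2) : ℝ) : ℂ)
      = ∫ r in Set.Ioi (0:ℝ), (r:ℂ) * Complex.exp (-(b:ℂ) * (r:ℂ)^2) := by
    rw [← hfun]
    exact (integral_ofReal (𝕜 := ℂ)).symm
  have h3 := h2.trans h
  have h4 : ((2*b)⁻¹ : ℂ) = (((2*b)⁻¹ : ℝ) : ℂ) := by push_cast; ring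
  rw [h4] at h3
  exact_mod_cast h3

lemma aux_int_abs {b : ℝ} (hb : 0 < b) :
    ∫ x : ℝ, |x| * Real.exp (-b * x^2) = b⁻¹ := by
  have h : ∫ x : ℝ, |x| * Real.exp (-b * |x|^2)
      = 2 * ∫ x in Set.Ioi (0:ℝ), x * Real.exp (-b * x^2) :=
    integral_comp_abs (f := fun x => x * Real.exp (-b * x^2))
  simp only [sq_abs] at h
  rw [h, aux_int_Ioi hb]
  field_simp

lemma aux_integrable_abs_exp {b : ℝ} (hb : 0 < b) :
    Integrable (fun x : ℝ => |x| * Real.exp (-b * x^2)) := by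
  have := (integrable_mul_exp_neg_mul_sq hb).abs
  refine this.congr ?_
  filter_upwards with x
  rw [abs_mul, abs_of_pos (Real.exp_pos _)]

lemma gaussianPDF_eq_nnreal (v : ℝ≥0) :
    gaussianPDF 0 v = fun x => ((Real.toNNReal (gaussianPDFReal 0 v x) : ℝ≥0) : ℝ≥0∞) := by
  funext x
  rfl

lemma gaussian_pdf_mul_abs_eq (v : ℝ≥0) (x : ℝ) :
    gaussianPDFReal 0 v x * |x|
      = (Real.sqrt (2 * Real.pi * v))⁻¹ * (|x| * Real.exp (-(2 * (v:ℝ))⁻¹ * x^2)) := by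
  rw [gaussianPDFReal]
  have : -(x - 0)^2 / (2 * (v:ℝ)) = -(2 * (v:ℝ))⁻¹ * x^2 := by
    field_simp
    ring
  rw [this]
  ring

lemma integrable_abs_gaussianReal (v : ℝ≥0) :
    Integrable (fun x : ℝ => |x|) (gaussianReal 0 v) := by
  by_cases hv : v = 0
  · rw [hv, gaussianReal_zero_var]
    exact (integrable_congr (ae_eq_dirac (fun x : ℝ => |x|))).mpr (integrable_const _)
  · have hvpos : 0 < (v:ℝ) := by
      positivity
    rw [gaussianReal_of_var_ne_zero 0 hv, gaussianPDF_eq_nnreal,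
      integrable_withDensity_iff_integrable_smul
        ((measurable_gaussianPDFReal 0 v).real_toNNReal)]
    have hb : 0 < (2*(v:ℝ))⁻¹ := by positivity
    refine ((aux_integrable_abs_exp hb).const_mul ((Real.sqrt (2 * Real.pi * v))⁻¹)).congr ?_
    filter_upwards with x
    rw [NNReal.smul_def, smul_eq_mul, Real.coe_toNNReal _ (gaussianPDFReal_nonneg 0 v x)]
    rw [← gaussian_pdf_mul_abs_eq, mul_comm]

lemma integral_abs_gaussianReal_le (v : ℝ≥0) :
    ∫ x : ℝ, |x| ∂(gaussianReal 0 v) ≤ Real.sqrt v := by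
  by_cases hv : v = 0
  · rw [hv, gaussianReal_zero_var, integral_dirac]
    simp
  · have hvpos : 0 < (v:ℝ) := by positivity
    have hb : 0 < (2*(v:ℝ))⁻¹ := by positivity
    rw [gaussianReal_of_var_ne_zero 0 hv, gaussianPDF_eq_nnreal,
      integral_withDensity_eq_integral_smul ((measurable_gaussianPDFReal 0 v).real_toNNReal)]
    have heq : (fun x : ℝ => (Real.toNNReal (gaussianPDFReal 0 v x)) • |x|)
        = fun x : ℝ => (Real.sqrt (2 * Real.pi * v))⁻¹
            * (|x| * Real.exp (-(2 * (v:ℝ))⁻¹ * x^2)) := by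
      funext x
      rw [NNReal.smul_def, smul_eq_mul, Real.coe_toNNReal _ (gaussianPDFReal_nonneg 0 v x),
        ← gaussian_pdf_mul_abs_eq]
    rw [heq, MeasureTheory.integral_const_mul, aux_int_abs hb]
    have h1 : ((2*(v:ℝ))⁻¹)⁻¹ = 2 * v := by simp
    rw [h1]
    have hsq : Real.sqrt (2 * Real.pi * v) = Real.sqrt (2 * Real.pi) * Real.sqrt v := by
      rw [← Real.sqrt_mul (by positivity)]
    rw [hsq]
    have h2pi : (2:ℝ) ≤ Real.sqrt (2 * Real.pi) := by
      have h4 : (4:ℝ) ≤ 2 * Real.pi := by nlinarith [Real.pi_gt_three]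
      nlinarith [Real.sq_sqrt (show (0:ℝ) ≤ 2*Real.pi by positivity),
        Real.sqrt_nonneg (2*Real.pi)]
    have hsv : 0 < Real.sqrt (v:ℝ) := Real.sqrt_pos.mpr hvpos
    have h2pi0 : 0 < Real.sqrt (2 * Real.pi) := by positivity
    rw [mul_inv, inv_mul_eq_div, div_mul_eq_mul_div]
    rw [div_le_iff₀ (by positivity)]
    have hvv : (v:ℝ) = Real.sqrt v * Real.sqrt v := (Real.mul_self_sqrt hvpos.le).symm
    calc (Real.sqrt (v:ℝ))⁻¹ * (2 * v) = 2 * Real.sqrt v := by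
          rw [inv_mul_eq_div, div_eq_iff hsv.ne', mul_assoc, Real.mul_self_sqrt hvpos.le]
      _ ≤ Real.sqrt v * Real.sqrt (2 * Real.pi) := by nlinarith

lemma aux_rpow_tendsto {e : ℝ} (he : e < 0) (C : ℝ) :
    Tendsto (fun n : ℕ => C * (n : ℝ) ^ e) atTop (nhds 0) := by
  have h1 : Tendsto (fun x : ℝ => x ^ e) atTop (nhds 0) := by
    have := tendsto_rpow_neg_atTop (neg_pos.mpr he)
    simpa using this
  have h2 : Tendsto (fun n : ℕ => (n : ℝ) ^ e) atTop (nhds 0) :=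
    h1.comp tendsto_natCast_atTop_atTop
  simpa using h2.const_mul C

/-- Remainder estimates in the CLT for the quadratic `a`-variations, case `H < 1/2`. -/
theorem remainder_estimates_small_H
    {Ω : Type*} [MeasurableSpace Ω] (μ : Measure Ω) [IsProbabilityMeasure μ]
    (H α M : ℝ) (hH : H ∈ Set.Ioo (0 : ℝ) (1 / 2))
    (hα : 1 / (2 * (1 - H)) < α) (hM : 0 ≤ M)
    (B : ℝ → Ω → ℝ) (f : ℝ → ℝ → ℝ) (X : ℝ → Ω → ℝ)
    (hbound : ∀ s x : ℝ, 0 ≤ s → |f s x| ≤ M)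
    (hInt : ∀ (ω : Ω) (u v : ℝ),
      IntervalIntegrable (fun s => f s (X s ω)) volume u v)
    (Y : ℝ → Ω → ℝ) (hY : ∀ t ω, Y t ω = ∫ s in (0 : ℝ)..t, f s (X s ω))
    (p : ℕ) (hp : 0 < p) (a : ℕ → ℝ)
    (hsum : ∑ i ∈ range (p + 1), a i = 0)
    (σ : ℕ → NNReal)
    (hσ : ∀ n : ℕ, 1 ≤ n → (σ n : ℝ)
      = -((((n : ℝ) ^ (-α)) ^ (2 * H)) / 2) *
          ∑ k ∈ range (p + 1), ∑ l ∈ range (p + 1),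
            a k * a l * |(k : ℝ) - l| ^ (2 * H))
    (hlaw : ∀ (n : ℕ) (i : ℕ), 1 ≤ n →
      μ.map (deltaAOmega a p ((n : ℝ) ^ (-α)) B i) = gaussianReal 0 (σ n))
    (hmeas : ∀ (n i : ℕ), AEMeasurable (deltaAOmega a p ((n : ℝ) ^ (-α)) B i) μ)
    (hIntBY : ∀ (n i : ℕ), Integrable (fun ω =>
      |deltaAOmega a p ((n : ℝ) ^ (-α)) B i ω| *
        |deltaAOmega a p ((n : ℝ) ^ (-α)) Y i ω|) μ) :
    (∃ C > 0, (∀ (n : ℕ) (ω : Ω), 1 ≤ n →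
        (n : ℝ) ^ (-(1 : ℝ) / 2) * ((n : ℝ) ^ (-α)) ^ (-(2 * H)) *
            ∑ i ∈ range (n - p + 1), (deltaAOmega a p ((n : ℝ) ^ (-α)) Y i ω) ^ 2
          ≤ C * (n : ℝ) ^ ((1 : ℝ) / 2 - α * (2 - 2 * H))) ∧
      ∀ ω : Ω, Tendsto (fun n : ℕ =>
        (n : ℝ) ^ (-(1 : ℝ) / 2) * ((n : ℝ) ^ (-α)) ^ (-(2 * H)) *
          ∑ i ∈ range (n - p + 1), (deltaAOmega a p ((n : ℝ) ^ (-α)) Y i ω) ^ 2)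
        atTop (nhds 0)) ∧
    (∃ C > 0, (∀ n : ℕ, 1 ≤ n →
        ∫ ω, (n : ℝ) ^ (-(1 : ℝ) / 2) * ((n : ℝ) ^ (-α)) ^ (-(2 * H)) *
            ∑ i ∈ range (n - p + 1),
              |deltaAOmega a p ((n : ℝ) ^ (-α)) B i ω| *
                |deltaAOmega a p ((n : ℝ) ^ (-α)) Y i ω| ∂μ
          ≤ C * (n : ℝ) ^ ((1 : ℝ) / 2 - α * (1 - H))) ∧
      Tendsto (fun n : ℕ =>
        ∫ ω, (n : ℝ) ^ (-(1 : ℝ) / 2) * ((n : ℝ) ^ (-α)) ^ (-(2 * H)) *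
          ∑ i ∈ range (n - p + 1),
            |deltaAOmega a p ((n : ℝ) ^ (-α)) B i ω| *
              |deltaAOmega a p ((n : ℝ) ^ (-α)) Y i ω| ∂μ)
        atTop (nhds 0)) := by
  obtain ⟨hH0, hH2⟩ := hH
  have h1H : 0 < 1 - H := by linarith
  have hα1 : 1 < α * (2 * (1 - H)) := by
    rw [div_lt_iff₀ (by linarith)] at hα
    linarith
  have hαpos : 0 < α := by nlinarith
  have he1 : (1:ℝ)/2 - α*(2-2*H) < 0 := by nlinarith
  have he2 : (1:ℝ)/2 - α*(1-H) < 0 := by nlinarith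
  set CA := (∑ k ∈ range (p+1), |a k|) * (M * p) with hCA
  have hCA0 : 0 ≤ CA := by positivity
  -- uniform bound on the filtered increments of Y
  have key : ∀ n : ℕ, 1 ≤ n → ∀ i (ω : Ω),
      |deltaAOmega a p ((n:ℝ)^(-α)) Y i ω| ≤ CA * (n:ℝ)^(-α) := by
    intro n hn i ω
    have hn0 : (0:ℝ) < n := by exact_mod_cast hn
    set Δ := (n:ℝ)^(-α) with hΔ
    have hΔ0 : 0 < Δ := Real.rpow_pos_of_pos hn0 _
    have hrw : deltaAOmega a p Δ Y i ω
        = ∑ k ∈ range (p+1), a k * (Y (((k+i:ℕ):ℝ)*Δ) ω - Y ((i:ℝ)*Δ) ω) := by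
      unfold deltaAOmega
      simp only [mul_sub]
      rw [Finset.sum_sub_distrib, ← Finset.sum_mul, hsum, zero_mul, sub_zero]
    rw [hrw]
    calc |∑ k ∈ range (p+1), a k * (Y (((k+i:ℕ):ℝ)*Δ) ω - Y ((i:ℝ)*Δ) ω)|
        ≤ ∑ k ∈ range (p+1), |a k * (Y (((k+i:ℕ):ℝ)*Δ) ω - Y ((i:ℝ)*Δ) ω)| :=
          Finset.abs_sum_le_sum_abs _ _
      _ ≤ ∑ k ∈ range (p+1), |a k| * (M * p * Δ) := by
          refine Finset.sum_le_sum fun k hk => ?_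
          rw [abs_mul]
          refine mul_le_mul_of_nonneg_left ?_ (abs_nonneg _)
          have hdiff : Y (((k+i:ℕ):ℝ)*Δ) ω - Y ((i:ℝ)*Δ) ω
              = ∫ s in ((i:ℝ)*Δ)..(((k+i:ℕ):ℝ)*Δ), f s (X s ω) := by
            rw [hY, hY]
            exact intervalIntegral.integral_interval_sub_left (hInt ω 0 _) (hInt ω 0 _)
          rw [hdiff]
          have hle : (i:ℝ)*Δ ≤ ((k+i:ℕ):ℝ)*Δ := by
            have : (i:ℝ) ≤ ((k+i:ℕ):ℝ) := by push_cast; linarith [Nat.cast_nonneg (α := ℝ) k]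
            exact mul_le_mul_of_nonneg_right this hΔ0.le
          have hbd := intervalIntegral.norm_integral_le_of_norm_le_const (C := M)
            (f := fun s => f s (X s ω)) (a := (i:ℝ)*Δ) (b := ((k+i:ℕ):ℝ)*Δ) ?_
          · rw [Real.norm_eq_abs] at hbd
            refine le_trans hbd ?_
            have habs : |((k+i:ℕ):ℝ)*Δ - (i:ℝ)*Δ| = (k:ℝ) * Δ := by
              rw [abs_of_nonneg (by linarith)]
              push_cast; ring
            rw [habs]
            have hk' : (k:ℝ) ≤ (p:ℝ) := by
              exact_mod_cast Nat.lt_succ_iff.mp (Finset.mem_range.mp hk)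
            calc M * ((k:ℝ) * Δ) ≤ M * ((p:ℝ) * Δ) := by
                  refine mul_le_mul_of_nonneg_left ?_ hM
                  exact mul_le_mul_of_nonneg_right hk' hΔ0.le
              _ = M * p * Δ := by ring
          · intro x hx
            rw [Set.uIoc_of_le hle] at hx
            have hx0 : 0 ≤ x := le_trans (by positivity) hx.1.le
            rw [Real.norm_eq_abs]
            exact hbound x _ hx0
      _ = CA * Δ := by rw [← Finset.sum_mul, hCA]; ring
  -- Part 1 bound
  have hb1 : ∀ (n : ℕ) (ω : Ω), 1 ≤ n →
      (n : ℝ) ^ (-(1 : ℝ) / 2) * ((n : ℝ) ^ (-α)) ^ (-(2 * H)) *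
          ∑ i ∈ range (n - p + 1), (deltaAOmega a p ((n : ℝ) ^ (-α)) Y i ω) ^ 2
        ≤ (2*CA^2+1) * (n : ℝ) ^ ((1 : ℝ) / 2 - α * (2 - 2 * H)) := by
    intro n ω hn
    have hn0 : (0:ℝ) < n := by exact_mod_cast hn
    have hΔ0 : 0 < (n:ℝ)^(-α) := Real.rpow_pos_of_pos hn0 _
    have hc0 : 0 ≤ (n:ℝ)^(-(1:ℝ)/2) * ((n:ℝ)^(-α))^(-(2*H)) := by positivity
    have hS : ∑ i ∈ range (n-p+1), (deltaAOmega a p ((n:ℝ)^(-α)) Y i ω)^2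
        ≤ ((n-p+1:ℕ):ℝ) * (CA*(n:ℝ)^(-α))^2 := by
      calc ∑ i ∈ range (n-p+1), (deltaAOmega a p ((n:ℝ)^(-α)) Y i ω)^2
          ≤ ∑ _i ∈ range (n-p+1), (CA*(n:ℝ)^(-α))^2 :=
            Finset.sum_le_sum fun i _ => by
              rw [← sq_abs]
              exact pow_le_pow_left₀ (abs_nonneg _) (key n hn i ω) 2
        _ = ((n-p+1:ℕ):ℝ) * (CA*(n:ℝ)^(-α))^2 := by
            rw [Finset.sum_const, Finset.card_range, nsmul_eq_mul]
    have hcount : ((n-p+1:ℕ):ℝ) ≤ 2*(n:ℝ) := by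
      have h : (n-p+1:ℕ) ≤ 2*n := by omega
      exact_mod_cast h
    have hfinal : (0:ℝ) < (n : ℝ) ^ ((1 : ℝ) / 2 - α * (2 - 2 * H)) :=
      Real.rpow_pos_of_pos hn0 _
    calc (n : ℝ) ^ (-(1 : ℝ) / 2) * ((n : ℝ) ^ (-α)) ^ (-(2 * H)) *
          ∑ i ∈ range (n - p + 1), (deltaAOmega a p ((n : ℝ) ^ (-α)) Y i ω) ^ 2
        ≤ (n:ℝ)^(-(1:ℝ)/2) * ((n:ℝ)^(-α))^(-(2*H)) *
            (((n-p+1:ℕ):ℝ) * (CA*(n:ℝ)^(-α))^2) := mul_le_mul_of_nonneg_left hS hc0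
      _ ≤ (n:ℝ)^(-(1:ℝ)/2) * ((n:ℝ)^(-α))^(-(2*H)) *
            ((2*(n:ℝ)) * (CA*(n:ℝ)^(-α))^2) :=
          mul_le_mul_of_nonneg_left
            (mul_le_mul_of_nonneg_right hcount (by positivity)) hc0
      _ = 2*CA^2 * ((n:ℝ)^(-(1:ℝ)/2) * (((n:ℝ)^(-α))^(-(2*H))) * (n:ℝ)^(1:ℝ) *
            ((n:ℝ)^(-α) * (n:ℝ)^(-α))) := by
          rw [Real.rpow_one]; ring
      _ = 2*CA^2 * (n:ℝ)^((1:ℝ)/2 - α*(2-2*H)) := by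
          rw [← Real.rpow_mul hn0.le]
          rw [← Real.rpow_add hn0, ← Real.rpow_add hn0, ← Real.rpow_add hn0,
            ← Real.rpow_add hn0]
          congr 1
          ring
      _ ≤ (2*CA^2+1) * (n : ℝ) ^ ((1 : ℝ) / 2 - α * (2 - 2 * H)) := by
          nlinarith
  -- Part 2 bound
  have hb2 : ∀ n : ℕ, 1 ≤ n →
      ∫ ω, (n : ℝ) ^ (-(1 : ℝ) / 2) * ((n : ℝ) ^ (-α)) ^ (-(2 * H)) *
          ∑ i ∈ range (n - p + 1),
            |deltaAOmega a p ((n : ℝ) ^ (-α)) B i ω| *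
              |deltaAOmega a p ((n : ℝ) ^ (-α)) Y i ω| ∂μ
        ≤ (2*CA*Real.sqrt (σ 1)+1) * (n : ℝ) ^ ((1 : ℝ) / 2 - α * (1 - H)) := by
    intro n hn
    have hn0 : (0:ℝ) < n := by exact_mod_cast hn
    have hΔ0 : 0 < (n:ℝ)^(-α) := Real.rpow_pos_of_pos hn0 _
    have hc0 : 0 ≤ (n:ℝ)^(-(1:ℝ)/2) * ((n:ℝ)^(-α))^(-(2*H)) := by positivity
    have hintB : ∀ i : ℕ, Integrable
        (fun ω => |deltaAOmega a p ((n:ℝ)^(-α)) B i ω|) μ := by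
      intro i
      have h := (integrable_map_measure (continuous_abs.aestronglyMeasurable)
        (hmeas n i)).mp ?_
      · exact h
      · rw [hlaw n i hn]
        exact integrable_abs_gaussianReal (σ n)
    have hEB : ∀ i : ℕ, ∫ ω, |deltaAOmega a p ((n:ℝ)^(-α)) B i ω| ∂μ
        ≤ Real.sqrt (σ n) := by
      intro i
      have h := integral_map (φ := deltaAOmega a p ((n:ℝ)^(-α)) B i)
        (f := fun x : ℝ => |x|) (hmeas n i) (continuous_abs.aestronglyMeasurable)
      rw [hlaw n i hn] at h
      rw [← h]
      exact integral_abs_gaussianReal_le (σ n)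
    have hIi : ∀ i : ℕ, ∫ ω, |deltaAOmega a p ((n:ℝ)^(-α)) B i ω| *
        |deltaAOmega a p ((n:ℝ)^(-α)) Y i ω| ∂μ
        ≤ CA * (n:ℝ)^(-α) * Real.sqrt (σ n) := by
      intro i
      have h1 : ∫ ω, |deltaAOmega a p ((n:ℝ)^(-α)) B i ω| *
          |deltaAOmega a p ((n:ℝ)^(-α)) Y i ω| ∂μ
          ≤ ∫ ω, |deltaAOmega a p ((n:ℝ)^(-α)) B i ω| * (CA * (n:ℝ)^(-α)) ∂μ := by
        refine integral_mono_of_nonneg (Filter.Eventually.of_forall fun ω => by positivity)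
          ((hintB i).mul_const _) (Filter.Eventually.of_forall fun ω => ?_)
        exact mul_le_mul_of_nonneg_left (key n hn i ω) (abs_nonneg _)
      rw [MeasureTheory.integral_mul_const] at h1
      refine h1.trans ?_
      calc (∫ ω, |deltaAOmega a p ((n:ℝ)^(-α)) B i ω| ∂μ) * (CA * (n:ℝ)^(-α))
          ≤ Real.sqrt (σ n) * (CA * (n:ℝ)^(-α)) :=
            mul_le_mul_of_nonneg_right (hEB i) (by positivity)
        _ = CA * (n:ℝ)^(-α) * Real.sqrt (σ n) := by ring
    have hσn : (σ n : ℝ) = ((n:ℝ)^(-α))^(2*H) * (σ 1 : ℝ) := by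
      rw [hσ n hn, hσ 1 le_rfl]
      push_cast [Real.one_rpow]
      ring
    have hsqσ : Real.sqrt (σ n) = ((n:ℝ)^(-α))^H * Real.sqrt (σ 1) := by
      have hΔH : ((n:ℝ)^(-α))^(2*H) = ((n:ℝ)^(-α))^H * ((n:ℝ)^(-α))^H := by
        rw [← Real.rpow_add hΔ0]; congr 1; ring
      rw [hσn, hΔH, Real.sqrt_mul (by positivity), Real.sqrt_mul_self (by positivity)]
    have hcount : ((n-p+1:ℕ):ℝ) ≤ 2*(n:ℝ) := by
      have h : (n-p+1:ℕ) ≤ 2*n := by omega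
      exact_mod_cast h
    rw [MeasureTheory.integral_const_mul,
      integral_finset_sum _ (fun i _ => hIntBY n i)]
    have hfinal : (0:ℝ) < (n : ℝ) ^ ((1 : ℝ) / 2 - α * (1 - H)) :=
      Real.rpow_pos_of_pos hn0 _
    calc (n:ℝ)^(-(1:ℝ)/2) * ((n:ℝ)^(-α))^(-(2*H)) *
          ∑ i ∈ range (n-p+1), ∫ ω, |deltaAOmega a p ((n:ℝ)^(-α)) B i ω| *
            |deltaAOmega a p ((n:ℝ)^(-α)) Y i ω| ∂μ
        ≤ (n:ℝ)^(-(1:ℝ)/2) * ((n:ℝ)^(-α))^(-(2*H)) *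
            (((n-p+1:ℕ):ℝ) * (CA * (n:ℝ)^(-α) * Real.sqrt (σ n))) := by
          refine mul_le_mul_of_nonneg_left ?_ hc0
          calc ∑ i ∈ range (n-p+1), ∫ ω, |deltaAOmega a p ((n:ℝ)^(-α)) B i ω| *
                |deltaAOmega a p ((n:ℝ)^(-α)) Y i ω| ∂μ
              ≤ ∑ _i ∈ range (n-p+1), CA * (n:ℝ)^(-α) * Real.sqrt (σ n) :=
                Finset.sum_le_sum fun i _ => hIi i
            _ = ((n-p+1:ℕ):ℝ) * (CA * (n:ℝ)^(-α) * Real.sqrt (σ n)) := by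
                rw [Finset.sum_const, Finset.card_range, nsmul_eq_mul]
      _ ≤ (n:ℝ)^(-(1:ℝ)/2) * ((n:ℝ)^(-α))^(-(2*H)) *
            ((2*(n:ℝ)) * (CA * (n:ℝ)^(-α) * Real.sqrt (σ n))) :=
          mul_le_mul_of_nonneg_left
            (mul_le_mul_of_nonneg_right hcount (by positivity)) hc0
      _ = 2*CA*Real.sqrt (σ 1) * ((n:ℝ)^(-(1:ℝ)/2) * (((n:ℝ)^(-α))^(-(2*H))) *
            (n:ℝ)^(1:ℝ) * ((n:ℝ)^(-α) * ((n:ℝ)^(-α))^H)) := by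
          rw [hsqσ, Real.rpow_one]; ring
      _ = 2*CA*Real.sqrt (σ 1) * (n:ℝ)^((1:ℝ)/2 - α*(1-H)) := by
          rw [← Real.rpow_mul hn0.le, ← Real.rpow_mul hn0.le]
          rw [← Real.rpow_add hn0, ← Real.rpow_add hn0, ← Real.rpow_add hn0,
            ← Real.rpow_add hn0]
          congr 1
          ring
      _ ≤ (2*CA*Real.sqrt (σ 1)+1) * (n : ℝ) ^ ((1 : ℝ) / 2 - α * (1 - H)) := by
          nlinarith [Real.sqrt_nonneg ((σ 1 : ℝ)), hfinal,
            mul_nonneg hCA0 (Real.sqrt_nonneg ((σ 1 : ℝ)))]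
  refine ⟨⟨2*CA^2+1, by positivity, hb1, fun ω => ?_⟩,
    ⟨2*CA*Real.sqrt (σ 1)+1, by positivity, hb2, ?_⟩⟩
  · refine squeeze_zero' (Filter.Eventually.of_forall fun n => ?_)
      (Filter.eventually_atTop.mpr ⟨1, fun n hn => hb1 n ω hn⟩)
      (aux_rpow_tendsto he1 _)
    refine mul_nonneg (by positivity) (Finset.sum_nonneg fun i _ => sq_nonneg _)
  · refine squeeze_zero' (Filter.Eventually.of_forall fun n => ?_)
      (Filter.eventually_atTop.mpr ⟨1, fun n hn => hb2 n hn⟩)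
      (aux_rpow_tendsto he2 _)
    exact integral_nonneg fun ω => by positivity
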